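/- Let R be a ring. Then the power series ring R[[x]] is a right Archimedean domain if and only if R is a right Archimedean domain. -/

import Mathlib

/-- A ring `R` is *right Archimedean* if for every nonunit `a ∈ R`,
`⋂ n, R·aⁿ = {0}`. -/
def RightArchimedean (R : Type*) [Ring R] : Prop :=
  ∀ a : R, ¬ IsUnit a → (⋂ n : ℕ, {x : R | ∃ r : R, x = r * a ^ n}) = {0}

open PowerSeries in
private lemma coeff_mul_of_lt_aux {R : Type*} [Semiring R] (r f : R⟦X⟧) {e k : ℕ}
    (he : ∀ i < e, coeff i r = 0) (hk : k < e) : coeff k (r * f) = 0 := by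
  rw [coeff_mul]
  refine Finset.sum_eq_zero fun p hp => ?_
  rw [Finset.HasAntidiagonal.mem_antidiagonal] at hp
  have : p.1 < e := lt_of_le_of_lt (le_trans (Nat.le_add_right _ _) hp.le) hk
  rw [he _ this, zero_mul]

open PowerSeries in
private lemma coeff_mul_at_min_aux {R : Type*} [Semiring R] (r f : R⟦X⟧) {e : ℕ}
    (he : ∀ i < e, coeff i r = 0) :
    coeff e (r * f) = coeff e r * constantCoeff f := by
  rw [coeff_mul]
  rw [show coeff e r * constantCoeff f = coeff (e, 0).1 r * coeff (e, 0).2 f by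
    simp [coeff_zero_eq_constantCoeff]]
  refine Finset.sum_eq_single _ (fun p hp hne => ?_) (by simp [Finset.mem_antidiagonal])
  rw [Finset.HasAntidiagonal.mem_antidiagonal] at hp
  rcases lt_or_eq_of_le (le_trans (Nat.le_add_right _ _) hp.le) with h | h
  · rw [he _ h, zero_mul]
  · exact absurd (Prod.ext h (by omega)) hne

open PowerSeries in
private lemma rightArchimedean_powerSeries {R : Type*} [Ring R] [IsDomain R]
    (hA : RightArchimedean R) : RightArchimedean R⟦X⟧ := by
  classical
  intro f hf
  ext g
  simp only [Set.mem_iInter, Set.mem_setOf_eq, Set.mem_singleton_iff]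
  constructor
  · intro h
    by_contra hg
    have hne : ∃ k, coeff k g ≠ 0 := by
      by_contra hc
      push_neg at hc
      exact hg (PowerSeries.ext hc)
    set d := Nat.find hne with hd
    have hdne : coeff d g ≠ 0 := Nat.find_spec hne
    have a0nu : ¬ IsUnit (constantCoeff f) := fun h' => hf (isUnit_iff_constantCoeff.mpr h')
    by_cases h0 : constantCoeff f = 0
    · -- f = X * f', so r * f^(d+1) has zero coefficients below d+1
      obtain ⟨f', hf'⟩ := X_dvd_iff.mpr h0
      obtain ⟨r, hr⟩ := h (d + 1)
      apply hdne
      have hg' : g = (r * f' ^ (d+1)) * X ^ (d+1) := by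
        rw [hr, hf', (commute_X f').symm.mul_pow,
          ← ((commute_X (f' ^ (d+1))).pow_right (d+1)).eq, ← mul_assoc]
      rw [hg', coeff_mul_X_pow']
      simp
    · -- main case: constant coefficient of f is a nonzero nonunit
      have key : ∀ n : ℕ, ∃ s : R, coeff d g = s * (constantCoeff f) ^ n := by
        intro n
        obtain ⟨r, hr⟩ := h n
        have hrne : ∃ i, coeff i r ≠ 0 := by
          by_contra hc
          push_neg at hc
          have hr0 : r = 0 := PowerSeries.ext fun i => by simp [hc i]
          exact hg (by rw [hr, hr0, zero_mul])
        set e := Nat.find hrne with he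
        have hemin : ∀ i < e, coeff i r = 0 := fun i hi => by
          by_contra hc; exact Nat.find_min hrne hi hc
        have hc0 : constantCoeff (f ^ n) = (constantCoeff f) ^ n := map_pow _ _ _
        have hcoeffe : coeff e g = coeff e r * (constantCoeff f) ^ n := by
          rw [hr, coeff_mul_at_min_aux r (f ^ n) hemin, hc0]
        have hcoefflt : ∀ k < e, coeff k g = 0 := fun k hk => by
          rw [hr]; exact coeff_mul_of_lt_aux r (f ^ n) hemin hk
        have heq : e = d := by
          have h1 : d ≤ e := Nat.find_min' hne (by
            rw [hcoeffe]
            exact mul_ne_zero (Nat.find_spec hrne) (pow_ne_zero n h0))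
          have h2 : ¬ d < e := fun hlt => hdne (hcoefflt d hlt)
          omega
        exact ⟨coeff d r, by rw [← heq, hcoeffe]⟩
      have : coeff d g ∈ ⋂ n : ℕ, {x : R | ∃ s : R, x = s * (constantCoeff f) ^ n} :=
        Set.mem_iInter.mpr fun n => key n
      rw [hA _ a0nu] at this
      exact hdne this
  · rintro rfl
    exact fun n => ⟨0, (zero_mul _).symm⟩

/-- The power series ring `R[[x]]` is a right Archimedean domain if and only if
`R` is a right Archimedean domain. -/
theorem powerSeries_rightArchimedean_domain_iff (R : Type*) [Ring R] :
    (IsDomain (PowerSeries R) ∧ RightArchimedean (PowerSeries R)) ↔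
      (IsDomain R ∧ RightArchimedean R) := by
  constructor
  · rintro ⟨hD, hA⟩
    have hnt : Nontrivial R := by
      refine ⟨0, 1, fun h01 => ?_⟩
      have : (0 : PowerSeries R) = 1 := by
        rw [← map_zero (PowerSeries.C), h01, map_one]
      exact zero_ne_one this
    have hnzd : NoZeroDivisors R := by
      refine ⟨fun {a b} hab => ?_⟩
      have : (PowerSeries.C) a * (PowerSeries.C) b = 0 := by
        rw [← map_mul, hab, map_zero]
      rcases mul_eq_zero.mp this with h | h
      · left
        have := congrArg (PowerSeries.constantCoeff) h
        simpa using this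
      · right
        have := congrArg (PowerSeries.constantCoeff) h
        simpa using this
    have hdom : IsDomain R := NoZeroDivisors.to_isDomain R
    refine ⟨hdom, ?_⟩
    intro a ha
    have hCa : ¬ IsUnit ((PowerSeries.C) a) := fun h => ha (by
      have := h.map (PowerSeries.constantCoeff)
      simpa using this)
    ext b
    simp only [Set.mem_iInter, Set.mem_setOf_eq, Set.mem_singleton_iff]
    constructor
    · intro hb
      have : (PowerSeries.C) b ∈
          ⋂ n : ℕ, {x : PowerSeries R | ∃ r, x = r * ((PowerSeries.C) a) ^ n} := by
        refine Set.mem_iInter.mpr fun n => ?_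
        obtain ⟨r, hr⟩ := hb n
        exact ⟨(PowerSeries.C) r, by rw [← map_pow, ← map_mul, hr]⟩
      rw [hA _ hCa] at this
      have := congrArg (PowerSeries.constantCoeff) this
      simpa using this
    · rintro rfl
      exact fun n => ⟨0, (zero_mul _).symm⟩
  · rintro ⟨hD, hA⟩
    exact ⟨inferInstance, rightArchimedean_powerSeries hA⟩
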